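/- Let n ≥ 1 and m be integers with m ≥ n, let θ be a real number with 0 < θ < 1, and assume that (2q)^{n+1} · θ^q ≤ n! for every integer q ≥ m+1. Then for every index i ∈ {1,…,n} the sum over all multi-indices Q ∈ ℕⁿ with |Q| ≥ m+1 of Q_i · θ^{2|Q|} converges and satisfies Σ_{Q ∈ ℕⁿ, |Q| ≥ m+1} Q_i · θ^{2|Q|} ≤ θ^{m+1} / (1 − θ). -/

import Mathlib

open Finset

instance fintypeFiberStmt10 (n c : ℕ) : Fintype {Q : Fin n → ℕ // ∑ j, Q j = c} :=
  Fintype.ofFinset (Finset.Nat.antidiagonalTuple n c) fun _ =>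
    Finset.Nat.mem_antidiagonalTuple

lemma card_repl_stmt10 {n : ℕ} (Q : Fin n → ℕ) :
    Multiset.card (∑ k, Multiset.replicate (Q k) k) = ∑ k, Q k := by
  induction (univ : Finset (Fin n)) using Finset.cons_induction with
  | empty => simp
  | cons a s ha ih => simp [Finset.sum_cons, ih]

lemma count_repl_stmt10 {n : ℕ} (Q : Fin n → ℕ) (j : Fin n) :
    Multiset.count j (∑ k, Multiset.replicate (Q k) k) = Q j := by
  rw [Multiset.count_sum']
  simp [Multiset.count_replicate, Finset.sum_ite_eq]

lemma card_fiber_le_stmt10 (n c : ℕ) :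
    Fintype.card {Q : Fin n → ℕ // ∑ j, Q j = c} ≤ Nat.multichoose n c := by
  rw [← Sym.card_sym_fin_eq_multichoose]
  refine Fintype.card_le_of_injective
    (fun Q => (⟨∑ k, Multiset.replicate (Q.1 k) k, by
        rw [card_repl_stmt10]; exact Q.2⟩ : Sym (Fin n) c)) ?_
  intro Q Q' h
  apply Subtype.ext; funext j
  have := congrArg (fun s : Sym (Fin n) c => Multiset.count j s.1) h
  simpa [count_repl_stmt10] using this

lemma card_fiber_mul_le_stmt10' (k c : ℕ) (hkc : k + 1 ≤ c) :
    c * (Fintype.card {Q : Fin (k + 1) → ℕ // ∑ j, Q j = c} * (k + 1).factorial)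
      ≤ (2 * c) ^ (k + 2) := by
  have e : k + 1 + c - 1 = k + c := by omega
  have e2 : k + c - k = c := by omega
  have e3 : k ≤ k + c := by omega
  have e4 : k + c ≤ 2 * c := by omega
  have e5 : k + 1 ≤ 2 * c := by omega
  have e6 : c ≤ 2 * c := by omega
  have h1 : Fintype.card {Q : Fin (k + 1) → ℕ // ∑ j, Q j = c} ≤ (k + c).choose k := by
    have := (card_fiber_le_stmt10 (k + 1) c).trans_eq (Nat.multichoose_eq _ _)
    have e7 : (k + c).choose c = (k + c).choose k := by
      rw [← Nat.choose_symm e3, e2]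
    rwa [e, e7] at this
  have h3 : k.factorial * ((k + c).choose k) ≤ (2 * c) ^ k :=
    calc k.factorial * (k + c).choose k = (k + c).descFactorial k := by
          rw [Nat.descFactorial_eq_factorial_mul_choose]
      _ ≤ (k + c) ^ k := Nat.descFactorial_le_pow _ _
      _ ≤ (2 * c) ^ k := Nat.pow_le_pow_left e4 _
  calc c * (Fintype.card {Q : Fin (k + 1) → ℕ // ∑ j, Q j = c} * (k + 1).factorial)
      = c * ((k + 1) * (Fintype.card {Q : Fin (k + 1) → ℕ // ∑ j, Q j = c} * k.factorial)) := by
        rw [Nat.factorial_succ]; ring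
    _ ≤ c * ((k + 1) * ((k + c).choose k * k.factorial)) :=
        Nat.mul_le_mul_left _ (Nat.mul_le_mul_left _ (Nat.mul_le_mul_right _ h1))
    _ = c * ((k + 1) * (k.factorial * (k + c).choose k)) := by ring
    _ ≤ c * ((2 * c) * (2 * c) ^ k) :=
        Nat.mul_le_mul_left _ (Nat.mul_le_mul e5 h3)
    _ ≤ (2 * c) * ((2 * c) * (2 * c) ^ k) := Nat.mul_le_mul_right _ e6
    _ = (2 * c) ^ (k + 2) := by ring

/-- Cauchy-type combinatorial estimate: if `n ≤ m`, `0 < θ < 1` and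
`(2q)^{n+1}·θ^q ≤ n!` for all `q ≥ m+1`, then for each coordinate `i` the sum
`Σ_{Q ∈ ℕⁿ, |Q| ≥ m+1} Q_i·θ^{2|Q|}` converges and is at most `θ^{m+1}/(1−θ)`. -/
theorem stmt_10 (n m : ℕ) (hn : 1 ≤ n) (hnm : n ≤ m) (θ : ℝ) (hθ0 : 0 < θ) (hθ1 : θ < 1)
    (hass : ∀ q : ℕ, m + 1 ≤ q → (2 * (q : ℝ)) ^ (n + 1) * θ ^ q ≤ n.factorial)
    (i : Fin n) :
    Summable (fun Q : {Q : Fin n → ℕ // m + 1 ≤ ∑ j, Q j} =>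
      (Q.1 i : ℝ) * θ ^ (2 * ∑ j, Q.1 j)) ∧
    ∑' Q : {Q : Fin n → ℕ // m + 1 ≤ ∑ j, Q j}, (Q.1 i : ℝ) * θ ^ (2 * ∑ j, Q.1 j) ≤
      θ ^ (m + 1) / (1 - θ) := by
  have hθ0' : (0:ℝ) ≤ θ := hθ0.le
  have hfact : (0:ℝ) < (n.factorial : ℝ) := by positivity
  -- key fiberwise estimate
  have key : ∀ c : ℕ, m + 1 ≤ c →
      ∑ Q : {Q : Fin n → ℕ // ∑ j, Q j = c}, (Q.1 i : ℝ) * θ ^ (2 * c) ≤ θ ^ c := by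
    intro c hc
    obtain ⟨k, rfl⟩ : ∃ k, n = k + 1 := ⟨n - 1, by omega⟩
    have hnat := card_fiber_mul_le_stmt10' k c (by omega)
    set N := Fintype.card {Q : Fin (k + 1) → ℕ // ∑ j, Q j = c} with hN
    clear_value N
    have h1 : ((c : ℝ) * ((N : ℝ) * ((k + 1).factorial : ℝ))) ≤ (2 * (c : ℝ)) ^ (k + 2) := by
      exact_mod_cast hnat
    have h2 := hass c hc
    have h3 : (c : ℝ) * N * θ ^ c ≤ 1 := by
      rw [← mul_le_mul_iff_of_pos_right hfact]
      calc (c : ℝ) * N * θ ^ c * (k + 1).factorial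
          = ((c : ℝ) * ((N : ℝ) * ((k + 1).factorial : ℝ))) * θ ^ c := by ring
        _ ≤ (2 * (c : ℝ)) ^ (k + 2) * θ ^ c :=
            mul_le_mul_of_nonneg_right h1 (by positivity)
        _ ≤ ((k + 1).factorial : ℝ) := h2
        _ = 1 * ((k + 1).factorial : ℝ) := (one_mul _).symm
    have hterm : ∀ Q : {Q : Fin (k + 1) → ℕ // ∑ j, Q j = c},
        (Q.1 i : ℝ) * θ ^ (2 * c) ≤ (c : ℝ) * θ ^ (2 * c) := by
      intro Q
      refine mul_le_mul_of_nonneg_right ?_ (by positivity)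
      have : Q.1 i ≤ c :=
        (Finset.single_le_sum (fun j _ => Nat.zero_le (Q.1 j)) (mem_univ i)).trans_eq Q.2
      exact_mod_cast this
    calc ∑ Q : {Q : Fin (k + 1) → ℕ // ∑ j, Q j = c}, (Q.1 i : ℝ) * θ ^ (2 * c)
        ≤ ∑ _Q : {Q : Fin (k + 1) → ℕ // ∑ j, Q j = c}, (c : ℝ) * θ ^ (2 * c) :=
          Finset.sum_le_sum (fun Q _ => hterm Q)
      _ = (N : ℝ) * ((c : ℝ) * θ ^ (2 * c)) := by
          rw [Finset.sum_const, Finset.card_univ, ← hN, nsmul_eq_mul]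
      _ = ((c : ℝ) * N * θ ^ c) * θ ^ c := by
          rw [two_mul, pow_add]; ring
      _ ≤ 1 * θ ^ c := mul_le_mul_of_nonneg_right h3 (by positivity)
      _ = θ ^ c := one_mul _
  -- the sigma-type decomposition
  set β : ℕ → Type := fun q => {Q : Fin n → ℕ // ∑ j, Q j = m + 1 + q} with hβ
  set f : (Σ q, β q) → ℝ := fun p => (p.2.1 i : ℝ) * θ ^ (2 * ∑ j, p.2.1 j) with hf
  let e : {Q : Fin n → ℕ // m + 1 ≤ ∑ j, Q j} ≃ Σ q, β q :=
    { toFun := fun Q => ⟨(∑ j, Q.1 j) - (m + 1), ⟨Q.1, by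
        have := Q.2; omega⟩⟩
      invFun := fun p => ⟨p.2.1, by
        have := p.2.2; omega⟩
      left_inv := fun Q => rfl
      right_inv := fun p => by
        obtain ⟨q, Q, hQ⟩ := p
        have hq : (∑ j, Q j) - (m + 1) = q := by omega
        subst hq
        rfl }
  have hfib_nonneg : ∀ p : Σ q, β q, 0 ≤ f p := fun p => by positivity
  have hfib_summable : ∀ q, Summable fun Q : β q => f ⟨q, Q⟩ :=
    fun q => (hasSum_fintype _).summable
  have hfib : ∀ q : ℕ, ∑' Q : β q, f ⟨q, Q⟩ ≤ θ ^ (m + 1) * θ ^ q := by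
    intro q
    rw [tsum_fintype]
    have : ∀ Q : β q, f ⟨q, Q⟩ = (Q.1 i : ℝ) * θ ^ (2 * (m + 1 + q)) := by
      intro Q; simp only [hf]; rw [Q.2]
    calc ∑ Q : β q, f ⟨q, Q⟩
        = ∑ Q : {Q : Fin n → ℕ // ∑ j, Q j = m + 1 + q},
            (Q.1 i : ℝ) * θ ^ (2 * (m + 1 + q)) := Finset.sum_congr rfl (fun Q _ => this Q)
      _ ≤ θ ^ (m + 1 + q) := key (m + 1 + q) (by omega)
      _ = θ ^ (m + 1) * θ ^ q := pow_add θ (m + 1) q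
  have hgeom : Summable fun q : ℕ => θ ^ (m + 1) * θ ^ q :=
    (summable_geometric_of_lt_one hθ0' hθ1).mul_left _
  have hsum2 : Summable fun q : ℕ => ∑' Q : β q, f ⟨q, Q⟩ :=
    Summable.of_nonneg_of_le (fun q => tsum_nonneg fun Q => hfib_nonneg _) hfib hgeom
  have hfsum : Summable f :=
    (summable_sigma_of_nonneg hfib_nonneg).2 ⟨hfib_summable, hsum2⟩
  have hFeq : (fun Q : {Q : Fin n → ℕ // m + 1 ≤ ∑ j, Q j} =>
      (Q.1 i : ℝ) * θ ^ (2 * ∑ j, Q.1 j)) = f ∘ e := by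
    funext Q; rfl
  constructor
  · rw [hFeq]
    exact e.summable_iff.mpr hfsum
  · rw [hFeq]
    have ht : ∑' Q, (f ∘ e) Q = ∑' p, f p := e.tsum_eq f
    rw [show ∑' Q : {Q : Fin n → ℕ // m + 1 ≤ ∑ j, Q j}, (f ∘ e) Q = ∑' p, f p from ht]
    calc ∑' p, f p = ∑' q, ∑' Q : β q, f ⟨q, Q⟩ := Summable.tsum_sigma' hfib_summable hfsum
      _ ≤ ∑' q : ℕ, θ ^ (m + 1) * θ ^ q := Summable.tsum_le_tsum hfib hsum2 hgeom
      _ = θ ^ (m + 1) * (1 - θ)⁻¹ := by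
          rw [tsum_mul_left, tsum_geometric_of_lt_one hθ0' hθ1]
      _ = θ ^ (m + 1) / (1 - θ) := (div_eq_mul_inv _ _).symm
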